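/- Let D be a connected acyclic local tournament with unique topological ordering (v_1, ..., v_n). For each vertex v_i, let l(v_i) be the last vertex u in the ordering with (v_i, u) an arc, and S_i = {v_i, v_{i+1}, ..., l(v_i)}. Then D[S_i] is an acyclic tournament and S_i = N+(v_i) ∪ {v_i}. -/

import Mathlib

/-- A local tournament: a loopless digraph in which, for every vertex `v`, both the
out-neighborhood and the in-neighborhood of `v` induce tournaments. -/
def IsLocalTournament {V : Type*} (A : V → V → Prop) : Prop :=
  (∀ v, ¬ A v v) ∧
  (∀ v x y : V, A v x → A v y → x ≠ y → (A x y ↔ ¬ A y x)) ∧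
  (∀ v x y : V, A x v → A y v → x ≠ y → (A x y ↔ ¬ A y x))

/-- The underlying undirected graph is connected. -/
def UConnected {V : Type*} (A : V → V → Prop) : Prop :=
  ∀ u v : V, Relation.ReflTransGen (fun a b => A a b ∨ A b a) u v

/-- Let `D` be a connected acyclic local tournament with unique topological ordering `σ`.
For each `i`, let `m i` be the position of the last vertex `u` in the ordering with an arc
from `σ i` to `u` (or `i` itself if none), and `S i = {σ i, σ (i+1), ..., σ (m i)}`. Then
`D[S i]` is an acyclic tournament and `S i = N⁺(σ i) ∪ {σ i}`. -/
theorem interval_induces_acyclic_tournament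
    {V : Type*} [Fintype V] (A : V → V → Prop) [DecidableRel A]
    (hLT : IsLocalTournament A) (hconn : UConnected A)
    (hac : Irreflexive (Relation.TransGen A))
    (σ : Fin (Fintype.card V) ≃ V)
    (htopo : ∀ i j : Fin (Fintype.card V), A (σ i) (σ j) → i < j)
    (huniq : ∀ τ : Fin (Fintype.card V) ≃ V,
      (∀ i j : Fin (Fintype.card V), A (τ i) (τ j) → i < j) → τ = σ)
    (i : Fin (Fintype.card V))
    (m : Fin (Fintype.card V))
    (hm : m = (insert i (Finset.univ.filter fun j => A (σ i) (σ j))).max'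
      (Finset.insert_nonempty _ _))
    (S : Set V) (hS : S = σ '' {j | i ≤ j ∧ j ≤ m}) :
    (S = insert (σ i) {u | A (σ i) u}) ∧
    (∀ u ∈ S, ∀ w ∈ S, u ≠ w → (A u w ↔ ¬ A w u)) ∧
    Irreflexive (Relation.TransGen fun a b => a ∈ S ∧ b ∈ S ∧ A a b) := by
  have hasym : ∀ u w : V, A u w → ¬ A w u := by
    intro u w huw hwu
    have h1 := htopo (σ.symm u) (σ.symm w) (by simpa using huw)
    have h2 := htopo (σ.symm w) (σ.symm u) (by simpa using hwu)
    exact absurd h1 (not_lt.2 h2.le)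
  -- consecutive vertices in the unique topological ordering are joined by an arc
  have hconsec : ∀ (k : Fin (Fintype.card V)) (hk : k.val + 1 < Fintype.card V),
      A (σ k) (σ ⟨k.val + 1, hk⟩) := by
    intro k hk
    by_contra hA
    obtain ⟨k', hk'v⟩ : ∃ k' : Fin (Fintype.card V), k'.val = k.val + 1 :=
      ⟨⟨k.val + 1, hk⟩, rfl⟩
    have hA' : ¬ A (σ k) (σ k') := by
      rwa [show k' = ⟨k.val + 1, hk⟩ from Fin.ext hk'v]
    have hne : k ≠ k' := fun h => by rw [← h] at hk'v; omega
    have hswap : ∀ p q : Fin (Fintype.card V), p < q → ¬(p = k ∧ q = k') →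
        Equiv.swap k k' p < Equiv.swap k k' q := by
      intro p q hpq hex
      rw [Fin.lt_def] at hpq
      by_cases hp1 : p = k
      · by_cases hq1 : q = k'
        · exact absurd ⟨hp1, hq1⟩ hex
        · have ep : p.val = k.val := congrArg Fin.val hp1
          have hq2 : q ≠ k := fun h => by
            have := congrArg Fin.val h; omega
          rw [hp1, Equiv.swap_apply_left, Equiv.swap_apply_of_ne_of_ne hq2 hq1, Fin.lt_def]
          have e1 : q.val ≠ k'.val := fun h => hq1 (Fin.ext h)
          omega
      · by_cases hp2 : p = k'
        · have ep : p.val = k'.val := congrArg Fin.val hp2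
          have hq1 : q ≠ k := fun h => by
            have := congrArg Fin.val h; omega
          have hq2 : q ≠ k' := fun h => by
            have := congrArg Fin.val h; omega
          rw [hp2, Equiv.swap_apply_right, Equiv.swap_apply_of_ne_of_ne hq1 hq2, Fin.lt_def]
          omega
        · rw [Equiv.swap_apply_of_ne_of_ne hp1 hp2]
          by_cases hq1 : q = k
          · have eq1 : q.val = k.val := congrArg Fin.val hq1
            rw [hq1, Equiv.swap_apply_left, Fin.lt_def]
            omega
          · by_cases hq2 : q = k'
            · have eq2 : q.val = k'.val := congrArg Fin.val hq2
              have e1 : p.val ≠ k.val := fun h => hp1 (Fin.ext h)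
              rw [hq2, Equiv.swap_apply_right, Fin.lt_def]
              omega
            · rw [Equiv.swap_apply_of_ne_of_ne hq1 hq2, Fin.lt_def]
              exact hpq
    have hτ : ∀ a b : Fin (Fintype.card V),
        A (((Equiv.swap k k').trans σ) a) (((Equiv.swap k k').trans σ) b) → a < b := by
      intro a b hab
      simp only [Equiv.trans_apply] at hab
      have hlt := htopo _ _ hab
      have hex : ¬(Equiv.swap k k' a = k ∧ Equiv.swap k k' b = k') := by
        rintro ⟨h1, h2⟩
        rw [h1, h2] at hab
        exact hA' hab
      have := hswap _ _ hlt hex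
      rwa [Equiv.swap_apply_self, Equiv.swap_apply_self] at this
    have heq := huniq _ hτ
    have : ((Equiv.swap k k').trans σ) k = σ k := by rw [heq]
    simp only [Equiv.trans_apply, Equiv.swap_apply_left] at this
    exact hne (σ.injective this).symm
  have hi_le_m : i ≤ m := by
    rw [hm]; exact Finset.le_max' _ _ (Finset.mem_insert_self _ _)
  -- every position strictly between i and m (inclusive) is an out-neighbor
  have key : ∀ t : ℕ, ∀ j : Fin (Fintype.card V), j.val + t = m.val → i < j → A (σ i) (σ j) := by
    intro t
    induction t with
    | zero =>
      intro j hj hij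
      have hjm : j = m := Fin.ext (by omega)
      subst hjm
      have hmem : j ∈ insert i (Finset.univ.filter fun l => A (σ i) (σ l)) := by
        rw [hm]; exact Finset.max'_mem _ _
      rcases Finset.mem_insert.1 hmem with h | h
      · exact absurd h.symm (ne_of_lt hij)
      · exact (Finset.mem_filter.1 h).2
    | succ t ih =>
      intro j hj hij
      have hjn : j.val + 1 < Fintype.card V := by
        have := m.isLt; omega
      set j' : Fin (Fintype.card V) := ⟨j.val + 1, hjn⟩ with hj'def
      have h1 : A (σ j) (σ j') := hconsec j hjn
      have h2 : A (σ i) (σ j') := by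
        refine ih j' (by simp [hj'def]; omega) ?_
        refine lt_trans hij ?_
        rw [Fin.lt_def]; simp [hj'def]
      have hne : σ i ≠ σ j := fun h => (ne_of_lt hij) (σ.injective h)
      refine (hLT.2.2 (σ j') (σ i) (σ j) h2 h1 hne).2 ?_
      intro hji
      exact absurd (htopo j i hji) (not_lt.2 hij.le)
  have harc : ∀ j : Fin (Fintype.card V), i < j → j ≤ m → A (σ i) (σ j) := by
    intro j hij hjm
    refine key (m.val - j.val) j ?_ hij
    rw [Fin.le_def] at hjm; omega
  have hSeq : S = insert (σ i) {u | A (σ i) u} := by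
    rw [hS]; ext u
    simp only [Set.mem_image, Set.mem_setOf_eq, Set.mem_insert_iff]
    constructor
    · rintro ⟨j, ⟨hij, hjm⟩, rfl⟩
      rcases eq_or_lt_of_le hij with rfl | h
      · exact Or.inl rfl
      · exact Or.inr (harc j h hjm)
    · rintro (rfl | h)
      · exact ⟨i, ⟨le_refl i, hi_le_m⟩, rfl⟩
      · refine ⟨σ.symm u, ⟨?_, ?_⟩, by simp⟩
        · exact le_of_lt (htopo i (σ.symm u) (by simpa using h))
        · rw [hm]
          exact Finset.le_max' _ _ (Finset.mem_insert_of_mem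
            (Finset.mem_filter.2 ⟨Finset.mem_univ _, by simpa using h⟩))
  refine ⟨hSeq, ?_, ?_⟩
  · intro u hu w hw hne
    rw [hSeq] at hu hw
    rcases hu with rfl | hu
    · rcases hw with rfl | hw
      · exact absurd rfl hne
      · exact ⟨fun _ => hasym _ _ hw, fun _ => hw⟩
    · rcases hw with rfl | hw
      · exact iff_of_false (hasym _ _ hu) (not_not_intro hu)
      · exact hLT.2.1 (σ i) u w hu hw hne
  · intro a ha
    exact hac a (Relation.TransGen.mono (fun x y (h : x ∈ S ∧ y ∈ S ∧ A x y) => h.2.2) a a ha)
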